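/- Let F be a nonempty finite set of points in ℂ. Then ∑_{z∈F} ∑_{w∈F, w≠z} ( log|z − w| − log max{1,|z|} − log max{1,|w|} ) ≤ (#F) · log(#F). -/

import Mathlib

open Finset Matrix
open scoped ComplexOrder

lemma amgm {N : ℕ} (hN : 0 < N) (f : Fin N → ℝ) (hf : ∀ i, 0 ≤ f i) :
    ∏ i, f i ≤ ((∑ i, f i) / N) ^ N := by
  have hN' : (N : ℝ) ≠ 0 := by positivity
  have h := Real.geom_mean_le_arith_mean_weighted univ (fun _ => (N:ℝ)⁻¹) f
    (fun i _ => by positivity) (by simp [Finset.sum_const, mul_comm]; field_simp)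
    (fun i _ => hf i)
  have key : ∀ i : Fin N, (f i ^ ((N:ℝ)⁻¹)) ^ N = f i := by
    intro i
    rw [← Real.rpow_natCast (f i ^ ((N:ℝ)⁻¹)), ← Real.rpow_mul (hf i),
      inv_mul_cancel₀ hN', Real.rpow_one]
  calc ∏ i, f i = (∏ i, f i ^ ((N:ℝ)⁻¹)) ^ N := by
        rw [← Finset.prod_pow]; exact (Finset.prod_congr rfl fun i _ => (key i)).symm
    _ ≤ ((∑ i, f i) / N) ^ N := by
        apply pow_le_pow_left₀ (Finset.prod_nonneg fun i _ => Real.rpow_nonneg (hf i) _)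
        calc (∏ i, f i ^ ((N:ℝ)⁻¹)) ≤ ∑ i, (N:ℝ)⁻¹ * f i := h
          _ = (∑ i, f i) / N := by rw [← Finset.mul_sum]; ring

lemma hadamard_weak {N : ℕ} (B : Matrix (Fin N) (Fin N) ℂ)
    (hB : ∀ i j, ‖B i j‖ ≤ 1) :
    ‖B.det‖ ^ 2 ≤ (N:ℝ) ^ N := by
  rcases Nat.eq_zero_or_pos N with rfl | hN
  · simp [Matrix.det_fin_zero]
  set G := B * Bᴴ with hG
  have hPSD : G.PosSemidef := Matrix.posSemidef_self_mul_conjTranspose B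
  have hH : G.IsHermitian := hPSD.1
  have hdet : G.det = ((‖B.det‖) ^ 2 : ℝ) := by
    rw [hG, Matrix.det_mul, Matrix.det_conjTranspose, Complex.star_def, Complex.mul_conj,
      ← Complex.sq_norm]
  have hdet2 : (‖B.det‖) ^ 2 = ∏ i, hH.eigenvalues i := by
    have h2 : ((‖B.det‖ ^ 2 : ℝ) : ℂ) = ((∏ i, hH.eigenvalues i : ℝ) : ℂ) := by
      rw [← hdet, hH.det_eq_prod_eigenvalues, Complex.ofReal_prod]; norm_cast
    exact_mod_cast h2
  -- trace of G equals the sum of eigenvalues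
  have htr1 : G.trace = ((∑ i, hH.eigenvalues i : ℝ) : ℂ) := by
    rw [hH.trace_eq_sum_eigenvalues, Complex.ofReal_sum]
    rfl
  -- trace of G is the sum of squared norms of entries
  have htr2 : G.trace = ((∑ i, ∑ j, ‖B i j‖ ^ 2 : ℝ) : ℂ) := by
    rw [Matrix.trace, Complex.ofReal_sum]
    refine Finset.sum_congr rfl fun i _ => ?_
    rw [Matrix.diag_apply, hG, Matrix.mul_apply, Complex.ofReal_sum]
    refine Finset.sum_congr rfl fun j _ => ?_
    rw [Matrix.conjTranspose_apply, Complex.star_def, Complex.mul_conj, ← Complex.sq_norm]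
  have hsum : ∑ i, hH.eigenvalues i = ∑ i, ∑ j, ‖B i j‖ ^ 2 := by
    have := htr1.symm.trans htr2
    exact_mod_cast this
  have htrle : ∑ i, hH.eigenvalues i ≤ (N : ℝ) * N := by
    rw [hsum]
    calc ∑ i, ∑ j, ‖B i j‖ ^ 2 ≤ ∑ i : Fin N, ∑ j : Fin N, (1:ℝ) := by
          refine Finset.sum_le_sum fun i _ => Finset.sum_le_sum fun j _ => ?_
          have := hB i j
          nlinarith [norm_nonneg (B i j)]
      _ = (N : ℝ) * N := by simp [Finset.sum_const]
  rw [hdet2]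
  calc ∏ i, hH.eigenvalues i ≤ ((∑ i, hH.eigenvalues i) / N) ^ N :=
        amgm hN _ (fun i => hPSD.eigenvalues_nonneg i)
    _ ≤ (N : ℝ) ^ N := by
        apply pow_le_pow_left₀ (div_nonneg (Finset.sum_nonneg fun i _ =>
          hPSD.eigenvalues_nonneg i) (Nat.cast_nonneg N))
        rw [div_le_iff₀ (by positivity)]
        exact htrle

lemma vandermonde_bound {N : ℕ} (hN : 0 < N) (v : Fin N → ℂ) :
    ‖(Matrix.vandermonde v).det‖ ^ 2 ≤
      (N:ℝ) ^ N * ∏ i, (max 1 (‖v i‖)) ^ (2 * (N - 1)) := by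
  set m : Fin N → ℝ := fun i => max 1 (‖v i‖) with hm
  have hm1 : ∀ i, 1 ≤ m i := fun i => le_max_left _ _
  have hm0 : ∀ i, 0 < m i := fun i => lt_of_lt_of_le one_pos (hm1 i)
  set c : Fin N → ℂ := fun i => ((m i) ^ (N - 1) : ℝ) with hc
  have hc0 : ∀ i, c i ≠ 0 := fun i => by
    simp only [hc, ne_eq, Complex.ofReal_eq_zero]
    positivity
  set B : Matrix (Fin N) (Fin N) ℂ :=
    Matrix.of fun i j => (c i)⁻¹ * Matrix.vandermonde v i j with hB
  have hBle : ∀ i j, ‖B i j‖ ≤ 1 := by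
    intro i j
    rw [hB, Matrix.of_apply, norm_mul, norm_inv, Matrix.vandermonde_apply, norm_pow]
    have habs : ‖c i‖ = m i ^ (N - 1) := by
      rw [hc, Complex.norm_real, Real.norm_of_nonneg (by positivity)]
    rw [habs, inv_mul_le_iff₀ (by positivity), mul_one]
    calc ‖v i‖ ^ (j : ℕ) ≤ m i ^ (j : ℕ) :=
          pow_le_pow_left₀ (norm_nonneg _) (le_max_right _ _) _
      _ ≤ m i ^ (N - 1) := pow_le_pow_right₀ (hm1 i) (by omega)
  have hdetV : (Matrix.vandermonde v).det = (∏ i, c i) * B.det := by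
    rw [← Matrix.det_mul_column c B]
    congr 1
    ext i j
    simp only [Matrix.of_apply, hB]
    rw [← mul_assoc, mul_inv_cancel₀ (hc0 i), one_mul]
  have habsV : ‖(Matrix.vandermonde v).det‖ ^ 2
      = (∏ i, m i ^ (2 * (N - 1))) * ‖B.det‖ ^ 2 := by
    rw [hdetV, norm_mul, mul_pow, norm_prod]
    congr 1
    rw [← Finset.prod_pow]
    refine Finset.prod_congr rfl fun i _ => ?_
    rw [hc, Complex.norm_real, Real.norm_of_nonneg (by positivity), ← pow_mul, mul_comm (N-1) 2]
  rw [habsV, mul_comm ((N:ℝ)^N) _]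
  exact mul_le_mul_of_nonneg_left (hadamard_weak B hBle)
    (Finset.prod_nonneg fun i _ => by positivity)

/-- **Mahler's estimate** (eq. (1)): for a nonempty finite set `F ⊆ ℂ`,
`∑_{z∈F} ∑_{w∈F, w≠z} (log|z−w| − log max{1,|z|} − log max{1,|w|}) ≤ #F · log #F`. -/
theorem mahler_estimate (F : Finset ℂ) (hF : F.Nonempty) :
    ∑ z ∈ F, ∑ w ∈ F.erase z,
      (Real.log (‖z - w‖) - Real.log (max 1 (‖z‖))
        - Real.log (max 1 (‖w‖)))
      ≤ (F.card : ℝ) * Real.log (F.card : ℝ) := by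
  set N := F.card with hNdef
  have hN : 0 < N := Finset.card_pos.mpr hF
  set e := F.equivFin with he
  set v : Fin N → ℂ := fun i => ((e.symm i : F) : ℂ) with hv
  have hvinj : Function.Injective v := fun i j h =>
    e.symm.injective (Subtype.coe_injective h)
  set f : ℂ → ℂ → ℝ := fun z w =>
    Real.log (‖z - w‖) - Real.log (max 1 (‖z‖))
      - Real.log (max 1 (‖w‖)) with hf
  have hsum1 : ∀ g : ℂ → ℝ, ∑ z ∈ F, g z = ∑ i, g (v i) := by
    intro g
    rw [← Finset.sum_coe_sort F g, ← Equiv.sum_comp e.symm (fun x : F => g (x : ℂ))]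
  have hLHS : ∑ z ∈ F, ∑ w ∈ F.erase z, f z w
      = ∑ i, ∑ j ∈ (Finset.univ.erase i), f (v i) (v j) := by
    have h1 : ∀ z ∈ F, ∑ w ∈ F.erase z, f z w = (∑ w ∈ F, f z w) - f z z := fun z hz =>
      Finset.sum_erase_eq_sub hz
    have h2 : ∀ i : Fin N, ∑ j ∈ Finset.univ.erase i, f (v i) (v j)
        = (∑ j, f (v i) (v j)) - f (v i) (v i) := fun i =>
      Finset.sum_erase_eq_sub (Finset.mem_univ i)
    calc ∑ z ∈ F, ∑ w ∈ F.erase z, f z w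
        = ∑ z ∈ F, ((∑ w ∈ F, f z w) - f z z) := Finset.sum_congr rfl h1
      _ = (∑ z ∈ F, ∑ w ∈ F, f z w) - ∑ z ∈ F, f z z := Finset.sum_sub_distrib _ _
      _ = (∑ i, ∑ j, f (v i) (v j)) - ∑ i, f (v i) (v i) := by
          rw [hsum1 (fun z => f z z), hsum1 (fun z => ∑ w ∈ F, f z w)]
          congr 1
          exact Finset.sum_congr rfl fun i _ => hsum1 (fun w => f (v i) w)
      _ = ∑ i, ((∑ j, f (v i) (v j)) - f (v i) (v i)) := (Finset.sum_sub_distrib _ _).symm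
      _ = ∑ i, ∑ j ∈ Finset.univ.erase i, f (v i) (v j) :=
          Finset.sum_congr rfl fun i _ => (h2 i).symm
  set m : Fin N → ℝ := fun i => max 1 (‖v i‖) with hm
  have hm1 : ∀ i, 1 ≤ m i := fun i => le_max_left _ _
  set P : Fin N → ℝ := fun i => Real.log (m i) with hP
  set g : Fin N → Fin N → ℝ := fun i j => Real.log (‖v i - v j‖) with hg
  have hfsplit : ∀ i j : Fin N, f (v i) (v j) = g i j - (P i + P j) := by
    intro i j; simp only [hf, hg, hP, hm]; ring
  -- the log-max part
  have hQ : ∑ i, ∑ j ∈ Finset.univ.erase i, (P i + P j)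
      = 2 * ((N:ℝ) - 1) * ∑ i, P i := by
    have hstep : ∀ i : Fin N, ∑ j ∈ Finset.univ.erase i, (P i + P j)
        = ((N:ℝ) - 1) * P i + ((∑ j, P j) - P i) := by
      intro i
      rw [Finset.sum_add_distrib, Finset.sum_const, Finset.card_erase_of_mem (Finset.mem_univ i),
        Finset.card_univ, Fintype.card_fin, Finset.sum_erase_eq_sub (Finset.mem_univ i),
        nsmul_eq_mul, Nat.cast_sub hN, Nat.cast_one]
    rw [Finset.sum_congr rfl (fun i _ => hstep i), Finset.sum_add_distrib, ← Finset.mul_sum,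
      Finset.sum_sub_distrib, Finset.sum_const, Finset.card_univ, Fintype.card_fin,
      nsmul_eq_mul]
    ring
  -- the log-distance part
  have hdet_ne : (Matrix.vandermonde v).det ≠ 0 :=
    Matrix.det_vandermonde_ne_zero_iff.mpr hvinj
  have habs_pos : 0 < ‖(Matrix.vandermonde v).det‖ :=
    norm_pos_iff.mpr hdet_ne
  have hvne : ∀ i j : Fin N, i ≠ j → ‖v i - v j‖ ≠ 0 := by
    intro i j hij
    simp only [ne_eq, norm_eq_zero, sub_eq_zero]
    exact fun h => hij (hvinj h)
  have hlogdet : Real.log (‖(Matrix.vandermonde v).det‖)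
      = ∑ i, ∑ j ∈ Finset.Ioi i, Real.log (‖v j - v i‖) := by
    have habsprod : ‖(Matrix.vandermonde v).det‖
        = ∏ i, ∏ j ∈ Finset.Ioi i, ‖v j - v i‖ := by
      rw [Matrix.det_vandermonde, norm_prod]
      exact Finset.prod_congr rfl fun i _ => norm_prod _ _
    rw [habsprod, Real.log_prod]
    · refine Finset.sum_congr rfl fun i _ => ?_
      refine Real.log_prod fun j hj => ?_
      exact hvne j i (Finset.mem_Ioi.mp hj).ne'
    · intro i _
      rw [Finset.prod_ne_zero_iff]
      exact fun j hj => hvne j i (Finset.mem_Ioi.mp hj).ne'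
  have hL : ∑ i, ∑ j ∈ Finset.univ.erase i, g i j
      = 2 * Real.log (‖(Matrix.vandermonde v).det‖) := by
    have hsymm := Finset.sum_sum_Ioi_add_eq_sum_sum_off_diag
      (fun i j : Fin N => Real.log (‖v i - v j‖))
    have hrhs : ∑ i, ∑ j ∈ ({i}ᶜ : Finset (Fin N)), Real.log (‖v j - v i‖)
        = ∑ i, ∑ j ∈ Finset.univ.erase i, g i j := by
      refine Finset.sum_congr rfl fun i _ => ?_
      rw [Finset.compl_singleton]
      exact Finset.sum_congr rfl fun j _ => by rw [hg]; rw [norm_sub_rev]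
    have hlhs : ∑ i, ∑ j ∈ Finset.Ioi i,
        (Real.log (‖v j - v i‖) + Real.log (‖v i - v j‖))
        = 2 * ∑ i, ∑ j ∈ Finset.Ioi i, Real.log (‖v j - v i‖) := by
      rw [Finset.mul_sum]
      refine Finset.sum_congr rfl fun i _ => ?_
      rw [Finset.mul_sum]
      refine Finset.sum_congr rfl fun j _ => ?_
      rw [norm_sub_rev (v i) (v j)]; ring
    rw [hlogdet, ← hlhs, hsymm]
    refine Finset.sum_congr rfl fun i _ => Finset.sum_congr (by ext j; simp)
      fun j _ => by rw [hg]; rw [norm_sub_rev]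
  -- the key estimate
  have hkey := vandermonde_bound hN v
  have hm0 : ∀ i, (0:ℝ) < m i ^ (2 * (N - 1)) := fun i => by
    have := hm1 i; positivity
  have hlogkey : 2 * Real.log (‖(Matrix.vandermonde v).det‖)
      ≤ (N:ℝ) * Real.log N + 2 * ((N:ℝ) - 1) * ∑ i, P i := by
    have h1 : Real.log (‖(Matrix.vandermonde v).det‖ ^ 2)
        ≤ Real.log ((N:ℝ) ^ N * ∏ i, (max 1 (‖v i‖)) ^ (2 * (N - 1))) :=
      Real.log_le_log (by positivity) hkey
    rw [Real.log_pow] at h1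
    rw [Real.log_mul (by positivity) (by
        refine Finset.prod_ne_zero_iff.mpr fun i _ => ?_
        exact (hm0 i).ne'), Real.log_pow,
      Real.log_prod (fun i _ => (hm0 i).ne')] at h1
    have h2 : ∀ i : Fin N, Real.log ((max 1 (‖v i‖)) ^ (2 * (N - 1)))
        = 2 * ((N:ℝ) - 1) * P i := by
      intro i
      rw [Real.log_pow, hP]
      push_cast [Nat.cast_sub hN]
      ring
    rw [Finset.sum_congr rfl (fun i _ => h2 i), ← Finset.mul_sum] at h1
    calc 2 * Real.log (‖(Matrix.vandermonde v).det‖)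
        = (2:ℕ) * Real.log (‖(Matrix.vandermonde v).det‖) := by norm_num
      _ ≤ (N:ℝ) * Real.log N + 2 * ((N:ℝ) - 1) * ∑ i, P i := h1
  -- assemble
  rw [hLHS, Finset.sum_congr rfl (fun i _ => Finset.sum_congr rfl fun j _ => hfsplit i j)]
  have hsplit : ∑ i, ∑ j ∈ Finset.univ.erase i, (g i j - (P i + P j))
      = (∑ i, ∑ j ∈ Finset.univ.erase i, g i j)
        - ∑ i, ∑ j ∈ Finset.univ.erase i, (P i + P j) := by
    rw [← Finset.sum_sub_distrib]
    exact Finset.sum_congr rfl fun i _ => by rw [← Finset.sum_sub_distrib]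
  rw [hsplit, hL, hQ]
  linarith [hlogkey]
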